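/- Let μ₋ > 0, 0 ≤ ν₋ < 1/2, and let q ∈ Sym₃ have eigenvalues q₁, q₂, q₃. Let |q|_max denote the largest absolute value of an eigenvalue of q and |q|_min the smallest, and suppose q_min·q_max > 0 (where q_min, q_max are the smallest and largest eigenvalues) and (1−ν₋)·|q|_min ≥ ν₋·|q|_max. Then the maximum of 𝒦₋(n,q) over all unit vectors n ∈ ℝ³ equals ((1−2ν₋)/(2μ₋(1−ν₋)))·|q|_max², and it is attained at n* equal to a unit eigenvector of q associated with an eigenvalue of maximal absolute value; moreover for such n*, K₋(n*):q = ((1−2ν₋)/(2μ₋(1−ν₋)))·|q|_max·(±1)·n*⊗n*, i.e. K₋(n*):q is the rank-one matrix ((1−2ν₋)/(2μ₋(1−ν₋)))·q_{n*n*}·n*⊗n*. -/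

import Mathlib

open Matrix

noncomputable section

/-- 3×3 real matrices; symmetric ones model Sym₃. -/
abbrev Mat := Matrix (Fin 3) (Fin 3) ℝ

/-- Inner product on matrices: a:b = tr(ab). -/
def inn (a b : Mat) : ℝ := (a * b).trace

/-- Isotropic elasticity tensor with Lamé parameters l, m: ε ↦ l(tr ε)E + 2mε. -/
def isoC (l m : ℝ) (e : Mat) : Mat := (l * e.trace) • (1 : Mat) + (2*m) • e

/-- The interface operator K(n) for material parameters (μ, ν):
K(n):q = (1/(2μ))(qₙ⊗n + n⊗qₙ − (qₙₙ/(1−ν)) n⊗n). -/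
def Kop (μ ν : ℝ) (n : Fin 3 → ℝ) (q : Mat) : Mat :=
  (1/(2*μ)) • (vecMulVec (q.mulVec n) n + vecMulVec n (q.mulVec n)
    - ((n ⬝ᵥ q.mulVec n)/(1-ν)) • vecMulVec n n)



lemma trace_mul_vecMulVec (q : Mat) (u v : Fin 3 → ℝ) :
    (q * vecMulVec u v).trace = v ⬝ᵥ q.mulVec u := by
  simp [Matrix.trace, Matrix.diag, Matrix.mul_apply, Matrix.vecMulVec_apply,
    Matrix.mulVec, dotProduct, Fin.sum_univ_three]
  ring

lemma inn_Kop (μ ν : ℝ) (n : Fin 3 → ℝ) (q : Mat) (hq : q.IsSymm) :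
    inn q (Kop μ ν n q)
      = (1/(2*μ)) * (2*(n ⬝ᵥ q.mulVec (q.mulVec n)) - (n ⬝ᵥ q.mulVec n)^2/(1-ν)) := by
  have h1 : n ᵥ* q = q *ᵥ n := by rw [← Matrix.mulVec_transpose, hq]
  have hsym : (q.mulVec n) ⬝ᵥ (q.mulVec n) = n ⬝ᵥ q.mulVec (q.mulVec n) := by
    conv_rhs => rw [Matrix.dotProduct_mulVec, h1]
  unfold inn Kop
  rw [Matrix.mul_smul, Matrix.trace_smul, Matrix.mul_sub, Matrix.mul_add, Matrix.mul_smul,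
    Matrix.trace_sub, Matrix.trace_add, Matrix.trace_smul,
    trace_mul_vecMulVec, trace_mul_vecMulVec, trace_mul_vecMulVec]
  rw [hsym]
  simp only [smul_eq_mul]
  ring

lemma scalar_ineq (ν m M a1 a2 a3 t1 t2 t3 : ℝ)
    (hν0 : 0 ≤ ν) (hν : ν < 1/2) (hm : 0 < m)
    (h1 : m ≤ a1) (h1' : a1 ≤ M) (h2 : m ≤ a2) (h2' : a2 ≤ M) (h3 : m ≤ a3) (h3' : a3 ≤ M)
    (ht1 : 0 ≤ t1) (ht2 : 0 ≤ t2) (ht3 : 0 ≤ t3) (hts : t1 + t2 + t3 = 1)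
    (hcond : ν*M ≤ (1-ν)*m) :
    2*(1-ν)*(a1^2*t1 + a2^2*t2 + a3^2*t3) - (a1*t1+a2*t2+a3*t3)^2 ≤ (1-2*ν)*M^2 := by
  have hS_le : a1*t1+a2*t2+a3*t3 ≤ M := by
    nlinarith [mul_nonneg ht1 (sub_nonneg.2 h1'), mul_nonneg ht2 (sub_nonneg.2 h2'),
      mul_nonneg ht3 (sub_nonneg.2 h3')]
  have hβ : (0:ℝ) ≤ 2*(1-ν) := by linarith
  have hq0 : a1^2*t1 + a2^2*t2 + a3^2*t3 ≤ (m+M)*(a1*t1+a2*t2+a3*t3) - m*M*(t1+t2+t3) := by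
    nlinarith [mul_nonneg ht1 (mul_nonneg (sub_nonneg.2 h1') (sub_nonneg.2 h1)),
      mul_nonneg ht2 (mul_nonneg (sub_nonneg.2 h2') (sub_nonneg.2 h2)),
      mul_nonneg ht3 (mul_nonneg (sub_nonneg.2 h3') (sub_nonneg.2 h3))]
  rw [hts, mul_one] at hq0
  have h4 : 0 ≤ 2*(1-ν)*m + (1-2*ν)*M - (a1*t1+a2*t2+a3*t3) := by nlinarith
  nlinarith [mul_le_mul_of_nonneg_left hq0 hβ,
    mul_nonneg (sub_nonneg.2 hS_le) h4]

/-- maximization of 𝒦₋(n,q) over unit normals in the "direct" regime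
(all eigenvalues of the same sign and (1−ν)|q|_min ≥ ν|q|_max): the maximum equals
((1−2ν)/(2μ(1−ν)))|q|_max², attained at any unit eigenvector with eigenvalue of
maximal absolute value, where K₋(n*):q = ((1−2ν)/(2μ(1−ν)))·q_{n*n*}·n*⊗n*. -/
theorem Kform_max_direct
    (μm νm : ℝ) (hμ : 0 < μm) (hν0 : 0 ≤ νm) (hν : νm < 1/2)
    (q : Mat) (hq : q.IsSymm)
    (e : Fin 3 → (Fin 3 → ℝ)) (ev : Fin 3 → ℝ)
    (horth : ∀ i j, e i ⬝ᵥ e j = if i = j then (1:ℝ) else 0)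
    (heig : ∀ i, q.mulVec (e i) = ev i • e i)
    (hsign : (∀ i, 0 < ev i) ∨ (∀ i, ev i < 0))
    (jmax jmin : Fin 3)
    (hjmax : ∀ i, |ev i| ≤ |ev jmax|) (hjmin : ∀ i, |ev jmin| ≤ |ev i|)
    (hcond : νm * |ev jmax| ≤ (1-νm) * |ev jmin|) :
    (∀ nvec : Fin 3 → ℝ, nvec ⬝ᵥ nvec = 1 →
        inn q (Kop μm νm nvec q) ≤ (1-2*νm)/(2*μm*(1-νm)) * (ev jmax)^2)
    ∧ ∀ j : Fin 3, (∀ i, |ev i| ≤ |ev j|) →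
        inn q (Kop μm νm (e j) q) = (1-2*νm)/(2*μm*(1-νm)) * (ev jmax)^2
        ∧ Kop μm νm (e j) q
            = ((1-2*νm)/(2*μm*(1-νm)) * ev j) • vecMulVec (e j) (e j) := by
  have h1ν : (0:ℝ) < 1 - νm := by linarith
  have hden : (0:ℝ) < 2*μm*(1-νm) := by positivity
  -- matrix of eigenvectors
  set E : Mat := Matrix.of e with hE
  have hEEt : E * Eᵀ = 1 := by
    ext i j
    simp only [Matrix.mul_apply, Matrix.transpose_apply, Matrix.one_apply, hE, Matrix.of_apply]
    simpa [dotProduct] using horth i j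
  have hEtE : Eᵀ * E = 1 := mul_eq_one_comm.mp hEEt
  set D : Mat := Matrix.diagonal ev with hD
  have hqEt : q * Eᵀ = Eᵀ * D := by
    ext a i
    rw [hD, Matrix.mul_diagonal]
    have h := congrFun (heig i) a
    simp only [Matrix.mulVec, dotProduct, Pi.smul_apply, smul_eq_mul] at h
    simp only [Matrix.mul_apply, Matrix.transpose_apply, hE, Matrix.of_apply]
    rw [h]; ring
  have hq2 : q = Eᵀ * D * E := by
    calc q = q * (Eᵀ * E) := by rw [hEtE, mul_one]
    _ = (q * Eᵀ) * E := by rw [mul_assoc]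
    _ = Eᵀ * D * E := by rw [hqEt]
  constructor
  · intro nvec hn
    set c : Fin 3 → ℝ := E.mulVec nvec with hc
    have hEt : ∀ w : Fin 3 → ℝ, nvec ⬝ᵥ Eᵀ.mulVec w = c ⬝ᵥ w := by
      intro w
      rw [Matrix.dotProduct_mulVec, Matrix.vecMul_transpose]
    have hqv : ∀ w : Fin 3 → ℝ, q.mulVec w = Eᵀ.mulVec (D.mulVec (E.mulVec w)) := by
      intro w
      rw [hq2, Matrix.mulVec_mulVec, Matrix.mulVec_mulVec]
    have hEE : ∀ w : Fin 3 → ℝ, E.mulVec (Eᵀ.mulVec w) = w := by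
      intro w
      rw [Matrix.mulVec_mulVec, hEEt, Matrix.one_mulVec]
    have hN1 : nvec ⬝ᵥ q.mulVec nvec = ev 0 * c 0^2 + ev 1 * c 1^2 + ev 2 * c 2^2 := by
      rw [hqv, hEt, ← hc]
      simp only [dotProduct, hD, Matrix.mulVec_diagonal, Fin.sum_univ_three]
      ring
    have hN2 : nvec ⬝ᵥ q.mulVec (q.mulVec nvec)
        = ev 0^2 * c 0^2 + ev 1^2 * c 1^2 + ev 2^2 * c 2^2 := by
      rw [hqv, hqv, hEt, hEE, ← hc]
      simp only [dotProduct, hD, Matrix.mulVec_diagonal, Fin.sum_univ_three]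
      ring
    have hcnorm : c 0^2 + c 1^2 + c 2^2 = 1 := by
      have h1 : Eᵀ.mulVec c = nvec := by
        rw [hc, Matrix.mulVec_mulVec, hEtE, Matrix.one_mulVec]
      have h2 := hEt c
      rw [h1, hn] at h2
      simpa [dotProduct, Fin.sum_univ_three, pow_two] using h2.symm
    rw [inn_Kop μm νm nvec q hq, hN1, hN2]
    set M := |ev jmax| with hM
    set m := |ev jmin| with hm
    have hM2 : M^2 = (ev jmax)^2 := sq_abs _
    have hm0 : 0 < m := by
      rcases hsign with hpos | hneg
      · rw [hm, abs_of_pos (hpos jmin)]; exact hpos jmin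
      · rw [hm, abs_of_neg (hneg jmin)]; linarith [hneg jmin]
    have key : 2*(1-νm)*(ev 0^2 * c 0^2 + ev 1^2 * c 1^2 + ev 2^2 * c 2^2)
        - (ev 0 * c 0^2 + ev 1 * c 1^2 + ev 2 * c 2^2)^2 ≤ (1-2*νm)*M^2 := by
      rcases hsign with hpos | hneg
      · have hma : ∀ i, m ≤ ev i := fun i => by
          calc m ≤ |ev i| := hjmin i
          _ = ev i := abs_of_pos (hpos i)
        have hMa : ∀ i, ev i ≤ M := fun i => by
          calc ev i ≤ |ev i| := le_abs_self _
          _ ≤ M := hjmax i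
        exact scalar_ineq νm m M (ev 0) (ev 1) (ev 2) (c 0^2) (c 1^2) (c 2^2)
          hν0 hν hm0 (hma 0) (hMa 0) (hma 1) (hMa 1) (hma 2) (hMa 2)
          (sq_nonneg _) (sq_nonneg _) (sq_nonneg _) hcnorm hcond
      · have hma : ∀ i, m ≤ -ev i := fun i => by
          calc m ≤ |ev i| := hjmin i
          _ = -ev i := abs_of_neg (hneg i)
        have hMa : ∀ i, -ev i ≤ M := fun i => by
          calc -ev i ≤ |ev i| := neg_le_abs _
          _ ≤ M := hjmax i
        have key' := scalar_ineq νm m M (-ev 0) (-ev 1) (-ev 2) (c 0^2) (c 1^2) (c 2^2)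
          hν0 hν hm0 (hma 0) (hMa 0) (hma 1) (hMa 1) (hma 2) (hMa 2)
          (sq_nonneg _) (sq_nonneg _) (sq_nonneg _) hcnorm hcond
        calc 2*(1-νm)*(ev 0^2 * c 0^2 + ev 1^2 * c 1^2 + ev 2^2 * c 2^2)
            - (ev 0 * c 0^2 + ev 1 * c 1^2 + ev 2 * c 2^2)^2
            = 2*(1-νm)*((-ev 0)^2 * c 0^2 + (-ev 1)^2 * c 1^2 + (-ev 2)^2 * c 2^2)
            - ((-ev 0) * c 0^2 + (-ev 1) * c 1^2 + (-ev 2) * c 2^2)^2 := by ring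
          _ ≤ (1-2*νm)*M^2 := key'
    have e1 : (1/(2*μm))*(2*(ev 0^2 * c 0^2 + ev 1^2 * c 1^2 + ev 2^2 * c 2^2)
          - (ev 0 * c 0^2 + ev 1 * c 1^2 + ev 2 * c 2^2)^2/(1-νm))
        = (2*(1-νm)*(ev 0^2 * c 0^2 + ev 1^2 * c 1^2 + ev 2^2 * c 2^2)
          - (ev 0 * c 0^2 + ev 1 * c 1^2 + ev 2 * c 2^2)^2)/(2*μm*(1-νm)) := by
      field_simp
    have e2 : (1-2*νm)/(2*μm*(1-νm)) * (ev jmax)^2 = ((1-2*νm)*M^2)/(2*μm*(1-νm)) := by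
      rw [hM2]; ring
    rw [e1, e2, div_le_div_iff_of_pos_right hden]
    exact key
  · intro j hj
    have hqe : q.mulVec (e j) = ev j • e j := heig j
    have hee : e j ⬝ᵥ e j = 1 := by simpa using horth j j
    have hnn : e j ⬝ᵥ q.mulVec (e j) = ev j := by
      rw [hqe, dotProduct_smul, hee, smul_eq_mul, mul_one]
    have habs : |ev j| = |ev jmax| := le_antisymm (hjmax j) (hj jmax)
    have hsq : ev j^2 = (ev jmax)^2 := by rw [← sq_abs, habs, sq_abs]
    have hKop : Kop μm νm (e j) q
        = ((1-2*νm)/(2*μm*(1-νm)) * ev j) • vecMulVec (e j) (e j) := by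
      unfold Kop
      rw [hqe, dotProduct_smul, hee, smul_eq_mul, mul_one]
      ext i k
      simp only [Matrix.smul_apply, Matrix.sub_apply, Matrix.add_apply,
        Matrix.vecMulVec_apply, Pi.smul_apply, smul_eq_mul]
      field_simp
      ring
    refine ⟨?_, hKop⟩
    rw [hKop]
    unfold inn
    rw [Matrix.mul_smul, Matrix.trace_smul, trace_mul_vecMulVec, hnn, smul_eq_mul]
    rw [show (1-2*νm)/(2*μm*(1-νm)) * ev j * ev j = (1-2*νm)/(2*μm*(1-νm)) * (ev j)^2 by ring, hsq]
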